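/- If G has property S, has rank N−1, and G = LU with L unit lower triangular and U upper triangular, then Lᵀe = e_N, i.e., each column of L except the last sums to zero and the last column of L is e_N. -/

import Mathlib

open Matrix

/-- For a property-S matrix of rank N−1 with LU decomposition G = LU, the column
sums of L are given by Lᵀe = e_N. -/
theorem property_S_LT_e_eq_eN (N : ℕ) (G L U : Matrix (Fin (N + 1)) (Fin (N + 1)) ℝ)
    (hdiag : ∀ i, 0 ≤ G i i)
    (hoff : ∀ i j, i ≠ j → G i j ≤ 0)
    (hrow : ∀ i, ∑ j, G i j = 0)
    (hcol : ∀ j, ∑ i, G i j = 0)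
    (hrank : G.rank = N)
    (hLdiag : ∀ i, L i i = 1)
    (hLlow : ∀ i j : Fin (N + 1), i < j → L i j = 0)
    (hUup : ∀ i j : Fin (N + 1), j < i → U i j = 0)
    (hLU : G = L * U) :
    Lᵀ *ᵥ (fun _ => (1 : ℝ)) = Pi.single (Fin.last N) 1 := by
  -- the all-ones vector is in the kernel of G
  have hGe : G *ᵥ (fun _ => (1 : ℝ)) = 0 := by
    funext i
    simp only [mulVec, dotProduct, mul_one, Pi.zero_apply]
    exact hrow i
  -- the kernel of G has dimension 1
  have hker : Module.finrank ℝ (LinearMap.ker G.mulVecLin) = 1 := by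
    have h := LinearMap.finrank_range_add_finrank_ker G.mulVecLin
    rw [show Module.finrank ℝ (LinearMap.range G.mulVecLin) = G.rank from rfl] at h
    rw [hrank] at h
    simp [Module.finrank_pi] at h
    omega
  -- key: diagonal entries of U are nonzero except possibly the last one
  have Udiag : ∀ k : Fin (N + 1), k ≠ Fin.last N → U k k ≠ 0 := by
    intro k hk hUk
    set m := k.val with hmdef
    have hm : m < N := by
      have := k.isLt
      rcases lt_or_eq_of_le (Nat.lt_succ_iff.mp this) with h | h
      · exact h
      · exact absurd (Fin.ext h : k = Fin.last N) hk
    -- the first m+1 columns of U, truncated to their first m rows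
    set f : Fin (m + 1) → Fin m → ℝ :=
      fun j i => U ⟨i.val, by omega⟩ ⟨j.val, by omega⟩ with hfdef
    have hdep : ¬ LinearIndependent ℝ f := by
      intro h
      have := h.fintype_card_le_finrank
      rw [Module.finrank_fin_fun] at this
      simp at this
    rw [Fintype.not_linearIndependent_iff] at hdep
    obtain ⟨g, hg, i0, hi0⟩ := hdep
    -- build the kernel vector x
    set x : Fin (N + 1) → ℝ :=
      fun p => if h : p.val < m + 1 then g ⟨p.val, h⟩ else 0 with hxdef
    set em : Fin (m + 1) → Fin (N + 1) := fun j => ⟨j.val, by omega⟩ with hemdef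
    have hem_inj : Function.Injective em := by
      intro a b hab
      apply Fin.ext
      simpa [hemdef] using congrArg Fin.val hab
    have hsum : ∀ r : Fin (N + 1),
        ∑ p, U r p * x p = ∑ j : Fin (m + 1), U r (em j) * g j := by
      intro r
      have h1 : ∑ p ∈ Finset.univ.image em, U r p * x p
          = ∑ j : Fin (m + 1), U r (em j) * x (em j) :=
        Finset.sum_image (fun a _ b _ h => hem_inj h)
      have h2 : ∑ p, U r p * x p = ∑ p ∈ Finset.univ.image em, U r p * x p := by
        refine (Finset.sum_subset (Finset.subset_univ _) ?_).symm
        intro p _ hp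
        have hpv : ¬ p.val < m + 1 := by
          intro hlt
          exact hp (Finset.mem_image.mpr ⟨⟨p.val, hlt⟩, Finset.mem_univ _, Fin.ext rfl⟩)
        have hx0 : x p = 0 := by
          simp [hxdef, hpv]
          intro h; omega
        rw [hx0, mul_zero]
      rw [h2, h1]
      apply Finset.sum_congr rfl
      intro j _
      congr 1
      simp [hxdef, hemdef]
      intro h; have := j.isLt; omega
    have hUx : U *ᵥ x = 0 := by
      funext r
      simp only [mulVec, dotProduct, Pi.zero_apply]
      rw [hsum r]
      by_cases hr : r.val < m
      · have := congrFun hg ⟨r.val, hr⟩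
        simp only [Finset.sum_apply, Pi.smul_apply, smul_eq_mul, Pi.zero_apply] at this
        rw [← this]
        apply Finset.sum_congr rfl
        intro j _
        rw [hfdef]
        have : U r (em j) = U ⟨r.val, by omega⟩ ⟨j.val, by omega⟩ := by
          congr 1
        rw [this]
        ring
      · apply Finset.sum_eq_zero
        intro j _
        have hjle : (em j).val ≤ m := by
          simp only [hemdef]
          omega
        have hjr : (em j).val ≤ r.val := by omega
        rcases lt_or_eq_of_le hjr with h | h
        · rw [hUup r (em j) (by rw [Fin.lt_def]; exact h), zero_mul]
        · have h1 : em j = k := Fin.ext (by omega)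
          have h2 : r = k := Fin.ext (by omega)
          rw [h1, h2, hUk, zero_mul]
    have hGx : G *ᵥ x = 0 := by
      rw [hLU, ← mulVec_mulVec, hUx, mulVec_zero]
    have hxne : x ≠ 0 := by
      intro h
      apply hi0
      have := congrFun h (em i0)
      have h' : (i0 : ℕ) ≤ m → g i0 = 0 := by simpa [hxdef, hemdef, i0.isLt] using this
      exact h' (by have := i0.isLt; omega)
    have hxlast : x (Fin.last N) = 0 := by
      simp only [hxdef, Fin.last]
      rw [dif_neg (by omega)]
    -- two independent kernel vectors contradict finrank ker = 1
    have hxk : x ∈ LinearMap.ker G.mulVecLin := by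
      rw [LinearMap.mem_ker, mulVecLin_apply]; exact hGx
    have hek : (fun _ => (1:ℝ)) ∈ LinearMap.ker G.mulVecLin := by
      rw [LinearMap.mem_ker, mulVecLin_apply]; exact hGe
    set w : Fin 2 → LinearMap.ker G.mulVecLin := ![⟨x, hxk⟩, ⟨fun _ => 1, hek⟩] with hwdef
    have hdep2 : ¬ LinearIndependent ℝ w := by
      intro h
      have := h.fintype_card_le_finrank
      rw [hker] at this
      simp at this
    rw [Fintype.not_linearIndependent_iff] at hdep2
    obtain ⟨c, hc, i1, hi1⟩ := hdep2
    have hcoe : c 0 • x + c 1 • (fun _ => (1:ℝ)) = 0 := by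
      have := congrArg (Subtype.val) hc
      rw [Submodule.coe_sum] at this
      simp only [Fin.sum_univ_two, hwdef] at this
      simpa using this
    have hc1 : c 1 = 0 := by
      have := congrFun hcoe (Fin.last N)
      simp [hxlast] at this
      exact this
    have hc0 : c 0 = 0 := by
      rw [hc1] at hcoe
      simp at hcoe
      rcases hcoe with h | h
      · exact h
      · exact absurd h hxne
    fin_cases i1 <;> simp_all
  -- column sums of L
  set v : Fin (N + 1) → ℝ := fun j => ∑ i, L i j with hvdef
  have hveq : ∀ j, ∑ k, v k * U k j = 0 := by
    intro j
    have : ∑ k, v k * U k j = ∑ i, ∑ k, L i k * U k j := by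
      rw [Finset.sum_comm]
      apply Finset.sum_congr rfl
      intro k _
      rw [hvdef, Finset.sum_mul]
    rw [this]
    have : ∀ i, ∑ k, L i k * U k j = G i j := by
      intro i; rw [hLU]; rfl
    rw [Finset.sum_congr rfl (fun i _ => this i)]
    exact hcol j
  have hvlast : v (Fin.last N) = 1 := by
    show ∑ i, L i (Fin.last N) = 1
    rw [Finset.sum_eq_single (Fin.last N)]
    · exact hLdiag _
    · intro i _ hi
      apply hLlow
      rw [Fin.lt_def]
      simp only [Fin.val_last]
      have h1 := i.isLt
      have h2 : i.val ≠ N := fun h => hi (Fin.ext h)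
      omega
    · intro h; exact absurd (Finset.mem_univ _) h
  have key : ∀ n : ℕ, ∀ hn : n < N, v ⟨n, by omega⟩ = 0 := by
    intro n
    induction n using Nat.strong_induction_on with
    | _ n ih =>
      intro hn
      have h := hveq ⟨n, by omega⟩
      rw [Finset.sum_eq_single (⟨n, by omega⟩ : Fin (N + 1))] at h
      · have hUnn := Udiag ⟨n, by omega⟩ (by
          intro hl
          have := congrArg Fin.val hl
          simp [Fin.last] at this
          omega)
        rcases mul_eq_zero.mp h with h' | h'
        · exact h'
        · exact absurd h' hUnn
      · intro k _ hk
        rcases lt_trichotomy k.val n with h' | h' | h'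
        · have hvk : v k = 0 := ih k.val (by omega) (by omega)
          rw [hvk, zero_mul]
        · exact absurd (Fin.ext h') hk
        · rw [hUup _ _ (by rw [Fin.lt_def]; exact h'), mul_zero]
      · intro h'; exact absurd (Finset.mem_univ _) h'
  funext j
  simp only [mulVec, dotProduct, transpose_apply, mul_one]
  by_cases hj : j = Fin.last N
  · rw [hj, Pi.single_eq_same]
    exact hvlast
  · rw [Pi.single_eq_of_ne hj]
    have hjn : j.val < N := by
      have := j.isLt
      have : j.val ≠ N := fun h => hj (Fin.ext h)
      omega
    exact key j.val hjn
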